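/- Let E be a real Banach space, let a < b be real numbers, and let u : ℝ → E be twice continuously differentiable on [a, b] with first derivative u′ and second derivative u″. Then ‖ (u(b) − u(a))/(b − a) − u′(b) ‖² ≤ ((b − a)/3) · ∫_a^b ‖u″(s)‖² ds. -/

import Mathlib

open intervalIntegral MeasureTheory

lemma interval_cauchy_schwarz (a b : ℝ) (hab : a ≤ b) (f g : ℝ → ℝ)
    (hf : ContinuousOn f (Set.Icc a b)) (hg : ContinuousOn g (Set.Icc a b)) :
    (∫ s in a..b, f s * g s) ^ 2 ≤
      (∫ s in a..b, f s ^ 2) * (∫ s in a..b, g s ^ 2) := by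
  have huIcc : Set.uIcc a b = Set.Icc a b := Set.uIcc_of_le hab
  have hif : IntervalIntegrable f volume a b :=
    (huIcc ▸ hf).intervalIntegrable
  have hig : IntervalIntegrable g volume a b :=
    (huIcc ▸ hg).intervalIntegrable
  have hiff : IntervalIntegrable (fun s => f s ^ 2) volume a b := by
    have : ContinuousOn (fun s => f s ^ 2) (Set.Icc a b) := hf.pow 2
    exact (huIcc ▸ this).intervalIntegrable
  have higg : IntervalIntegrable (fun s => g s ^ 2) volume a b := by
    have : ContinuousOn (fun s => g s ^ 2) (Set.Icc a b) := hg.pow 2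
    exact (huIcc ▸ this).intervalIntegrable
  have hifg : IntervalIntegrable (fun s => f s * g s) volume a b := by
    have : ContinuousOn (fun s => f s * g s) (Set.Icc a b) := hf.mul hg
    exact (huIcc ▸ this).intervalIntegrable
  set A := ∫ s in a..b, f s ^ 2 with hA
  set B := ∫ s in a..b, f s * g s with hB
  set C := ∫ s in a..b, g s ^ 2 with hC
  have key : ∀ t : ℝ, 0 ≤ A * (t * t) + (2 * B) * t + C := by
    intro t
    have expand : A * (t * t) + (2 * B) * t + C
        = ∫ s in a..b, (t * f s + g s) ^ 2 := by
      have : (fun s => (t * f s + g s) ^ 2)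
          = fun s => (t ^ 2) * (f s ^ 2) + ((2 * t) * (f s * g s) + g s ^ 2) := by
        funext s; ring
      rw [this, intervalIntegral.integral_add ((hiff.const_mul _))
          (((hifg.const_mul _)).add higg),
        intervalIntegral.integral_add ((hifg.const_mul _)) higg,
        intervalIntegral.integral_const_mul, intervalIntegral.integral_const_mul]
      ring
    rw [expand]
    apply intervalIntegral.integral_nonneg hab
    intro s _
    positivity
  have hd : discrim A (2 * B) C ≤ 0 := discrim_le_zero key
  rw [discrim] at hd
  nlinarith [hd]

/-- Backward-difference consistency estimate (used in Theorem 4.3):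
‖(u(b) − u(a))/(b − a) − u′(b)‖² ≤ ((b − a)/3) ∫_a^b ‖u″(s)‖² ds. -/
theorem backward_difference_consistency
    {E : Type*} [NormedAddCommGroup E] [NormedSpace ℝ E] [CompleteSpace E]
    (a b : ℝ) (hab : a < b) (u u' u'' : ℝ → E)
    (hu' : ∀ s ∈ Set.Icc a b, HasDerivAt u (u' s) s)
    (hu'' : ∀ s ∈ Set.Icc a b, HasDerivAt u' (u'' s) s)
    (hcont : ContinuousOn u'' (Set.Icc a b)) :
    ‖(b - a)⁻¹ • (u b - u a) - u' b‖ ^ 2 ≤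
      ((b - a) / 3) * ∫ s in a..b, ‖u'' s‖ ^ 2 := by
  have hc : (0:ℝ) < b - a := sub_pos.mpr hab
  have hcne : (b - a) ≠ 0 := ne_of_gt hc
  have huIcc : Set.uIcc a b = Set.Icc a b := Set.uIcc_of_le hab.le
  -- g s = u s - (s - a) • u' s has derivative -((s - a) • u'' s)
  have hg : ∀ s ∈ Set.uIcc a b,
      HasDerivAt (fun s => u s - (s - a) • u' s) (-((s - a) • u'' s)) s := by
    intro s hs
    rw [huIcc] at hs
    have h1 : HasDerivAt (fun s : ℝ => s - a) 1 s := (hasDerivAt_id s).sub_const a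
    have h2 : HasDerivAt (fun s => (s - a) • u' s)
        ((s - a) • u'' s + (1:ℝ) • u' s) s := h1.smul (hu'' s hs)
    have h3 := (hu' s hs).sub h2
    convert h3 using 1
    · rfl
    module
  have hint : IntervalIntegrable (fun s => -((s - a) • u'' s)) volume a b := by
    have : ContinuousOn (fun s => -((s - a) • u'' s)) (Set.Icc a b) :=
      ((continuousOn_id.sub continuousOn_const).smul hcont).neg
    exact (huIcc ▸ this).intervalIntegrable
  have hFTC := intervalIntegral.integral_eq_sub_of_hasDerivAt hg hint
  -- ∫ -((s-a) • u'' s) = (u b - (b-a) • u' b) - (u a - 0)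
  have hkey : (b - a)⁻¹ • (u b - u a) - u' b
      = -((b - a)⁻¹ • ∫ s in a..b, (s - a) • u'' s) := by
    rw [intervalIntegral.integral_neg] at hFTC
    have : (∫ s in a..b, (s - a) • u'' s) = (b - a) • u' b - (u b - u a) := by
      have := hFTC
      simp only [sub_self, zero_smul, sub_zero] at this
      have h := neg_eq_iff_eq_neg.mp this
      rw [h]; abel
    rw [this, smul_sub, smul_sub, smul_smul, inv_mul_cancel₀ hcne, one_smul]
    module
  rw [hkey, norm_neg, norm_smul, norm_inv, Real.norm_eq_abs, abs_of_pos hc]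
  have hnorm : ‖∫ s in a..b, (s - a) • u'' s‖ ≤ ∫ s in a..b, |s - a| * ‖u'' s‖ := by
    have := intervalIntegral.norm_integral_le_integral_norm
      (f := fun s => (s - a) • u'' s) (a := a) (b := b) (μ := volume) hab.le
    simpa [norm_smul, Real.norm_eq_abs] using this
  have hCS := interval_cauchy_schwarz a b hab.le (fun s => |s - a|) (fun s => ‖u'' s‖)
    ((continuousOn_id.sub continuousOn_const).abs) hcont.norm
  have hsq1 : (∫ s in a..b, |s - a| ^ 2) = (b - a) ^ 3 / 3 := by
    simp only [sq_abs]
    have : (∫ s in a..b, (s - a) ^ 2) = ∫ s in (a-a)..(b-a), s ^ 2 := by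
      rw [← intervalIntegral.integral_comp_sub_right (fun s => s ^ 2) a]
    rw [this, sub_self, integral_pow]
    ring
  rw [hsq1] at hCS
  have hC_nonneg : (0:ℝ) ≤ ∫ s in a..b, ‖u'' s‖ ^ 2 :=
    intervalIntegral.integral_nonneg hab.le (fun s _ => by positivity)
  have hI_nonneg : (0:ℝ) ≤ ∫ s in a..b, |s - a| * ‖u'' s‖ :=
    intervalIntegral.integral_nonneg hab.le (fun s _ => by positivity)
  have hN := norm_nonneg (∫ s in a..b, (s - a) • u'' s)
  have goal2 : ((b - a)⁻¹ * ‖∫ s in a..b, (s - a) • u'' s‖) ^ 2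
      ≤ (b - a)⁻¹ ^ 2 * ((b - a) ^ 3 / 3 * ∫ s in a..b, ‖u'' s‖ ^ 2) := by
    have h1 : ‖∫ s in a..b, (s - a) • u'' s‖ ^ 2
        ≤ (∫ s in a..b, |s - a| * ‖u'' s‖) ^ 2 := by nlinarith
    have h2 : ‖∫ s in a..b, (s - a) • u'' s‖ ^ 2
        ≤ (b - a) ^ 3 / 3 * ∫ s in a..b, ‖u'' s‖ ^ 2 := le_trans h1 hCS
    calc ((b - a)⁻¹ * ‖∫ s in a..b, (s - a) • u'' s‖) ^ 2
        = (b - a)⁻¹ ^ 2 * ‖∫ s in a..b, (s - a) • u'' s‖ ^ 2 := by ring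
      _ ≤ (b - a)⁻¹ ^ 2 * ((b - a) ^ 3 / 3 * ∫ s in a..b, ‖u'' s‖ ^ 2) := by
          apply mul_le_mul_of_nonneg_left h2 (by positivity)
  calc ((b - a)⁻¹ * ‖∫ s in a..b, (s - a) • u'' s‖) ^ 2
      ≤ (b - a)⁻¹ ^ 2 * ((b - a) ^ 3 / 3 * ∫ s in a..b, ‖u'' s‖ ^ 2) := goal2
    _ = ((b - a) / 3) * ∫ s in a..b, ‖u'' s‖ ^ 2 := by
        field_simp
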